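/- The generating function for permutations counted by length (variable z) and number of marked bonds (variable u) is A(z,u) = Σ_{m≥0} m! · (z + 2z²u/(1 − zu))^m; i.e., the coefficient of z^n u^m in A equals the number of pairs (π, M) with π ∈ S_n and M a set of m bonds of π. -/

import Mathlib

/-- The entry at position `k` of `σ` (0-indexed) is a *vertical separator*:
there are positions `j, j+1, j+2` with `k = j+1` and `|σ j - σ (j+2)| = 1`. -/
def IsVSepPos {n : ℕ} (σ : Equiv.Perm (Fin n)) (k : Fin n) : Prop :=
  ∃ (j : ℕ) (h : j + 2 < n), (k : ℕ) = j + 1 ∧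
    (((σ ⟨j, by omega⟩).val : ℤ) - ((σ ⟨j + 2, h⟩).val : ℤ)).natAbs = 1

/-- The value `b` is a vertical separator of `σ`. -/
def IsVSepVal {n : ℕ} (σ : Equiv.Perm (Fin n)) (b : Fin n) : Prop :=
  IsVSepPos σ (σ⁻¹ b)

/-- The value `a` is a *horizontal separator* of `σ`: the values `a-1` and `a+1`
occupy adjacent positions of `σ` (their sum is `2a` and they differ by `2`). -/
def IsHSepVal {n : ℕ} (σ : Equiv.Perm (Fin n)) (a : Fin n) : Prop :=
  ∃ (j : ℕ) (h : j + 1 < n),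
    (((σ ⟨j, by omega⟩).val : ℤ) - ((σ ⟨j + 1, h⟩).val : ℤ)).natAbs = 2 ∧
    ((σ ⟨j, by omega⟩).val : ℤ) + ((σ ⟨j + 1, h⟩).val : ℤ) = 2 * (a : ℤ)

/-- `σ` has a bond at positions `j, j+1`. -/
def PermBondAt {n : ℕ} (σ : Equiv.Perm (Fin n)) (j : ℕ) (h : j + 1 < n) : Prop :=
  (((σ ⟨j, by omega⟩).val : ℤ) - ((σ ⟨j + 1, h⟩).val : ℤ)).natAbs = 1

/-- The sequence obtained from `σ` by deleting the entry at position `p`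
and standardizing. -/
def delSeq {n : ℕ} (σ : Equiv.Perm (Fin n)) (p : Fin n) : Fin (n - 1) → ℕ :=
  fun k =>
    let q : Fin n :=
      if (k : ℕ) < (p : ℕ) then ⟨k, by have := k.isLt; omega⟩
      else ⟨(k : ℕ) + 1, by have := k.isLt; omega⟩
    if (σ q).val < (σ p).val then (σ q).val else (σ q).val - 1

/-- A sequence has a bond at positions `j, j+1`. -/
def SeqBondAt {m : ℕ} (g : Fin m → ℕ) (j : ℕ) (h : j + 1 < m) : Prop :=
  ((g ⟨j, by omega⟩ : ℤ) - (g ⟨j + 1, h⟩ : ℤ)).natAbs = 1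

/-- The number of bonds of a sequence. -/
noncomputable def seqBondCount {m : ℕ} (g : Fin m → ℕ) : ℕ :=
  Nat.card {p : Fin m × Fin m //
    (p.2 : ℕ) = (p.1 : ℕ) + 1 ∧ ((g p.1 : ℤ) - (g p.2 : ℤ)).natAbs = 1}

/-- The number of bonds of `σ`. -/
noncomputable def bondCount {n : ℕ} (σ : Equiv.Perm (Fin n)) : ℕ :=
  Nat.card {p : Fin n × Fin n //
    (p.2 : ℕ) = (p.1 : ℕ) + 1 ∧ (((σ p.1).val : ℤ) - ((σ p.2).val : ℤ)).natAbs = 1}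

open PowerSeries in
/-- The series `z + 2z²u + 2z³u² + ⋯ = z + 2z²u/(1-zu)`, as an element of
`ℚ[[u]][[z]]` (outer variable `z`, inner variable `u`). -/
noncomputable def runGF : PowerSeries (PowerSeries ℚ) :=
  PowerSeries.mk fun j =>
    if j = 0 then 0
    else if j = 1 then 1
    else 2 * (PowerSeries.X : PowerSeries ℚ) ^ (j - 1)



def wgt (s : ℕ) : ℕ := if s ≤ 1 then 1 else 2

def Wc : ℕ → ℕ → ℕ
  | n, 0 => if n = 0 then 1 else 0
  | n, (k+1) => ∑ j ∈ Finset.range n, wgt (j+1) * Wc (n - (j+1)) k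

lemma Wc_eq_zero : ∀ k n, n < k → Wc n k = 0 := by
  intro k
  induction k with
  | zero => omega
  | succ k ih =>
    intro n hn
    rw [Wc]
    apply Finset.sum_eq_zero
    intro j hj
    rw [Finset.mem_range] at hj
    rw [ih (n - (j+1)) (by omega), mul_zero]

open PowerSeries in
lemma runGF_pow_coeff (k n : ℕ) :
    coeff (R := PowerSeries ℚ) n (runGF ^ k)
      = C (R := ℚ) (Wc n k) * (X : PowerSeries ℚ) ^ (n - k) := by
  induction k generalizing n with
  | zero =>
    rw [pow_zero, coeff_one, Wc]
    by_cases h : n = 0 <;> simp [h]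
  | succ k ih =>
    rw [pow_succ', coeff_mul, Finset.Nat.sum_antidiagonal_eq_sum_range_succ_mk,
      Finset.sum_range_succ']
    have h0 : coeff (R := PowerSeries ℚ) 0 runGF = 0 := by simp [runGF, coeff_mk]
    rw [h0, zero_mul, add_zero]
    have hterm : ∀ j ∈ Finset.range n,
        coeff (R := PowerSeries ℚ) (j+1) runGF * coeff (R := PowerSeries ℚ) (n - (j+1)) (runGF ^ k)
          = C (R := ℚ) ((wgt (j+1) * Wc (n - (j+1)) k : ℕ)) * (X : PowerSeries ℚ) ^ (n - (k+1)) := by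
      intro j hj
      rw [Finset.mem_range] at hj
      rw [ih]
      by_cases hk : n - (j+1) < k
      · rw [Wc_eq_zero k _ hk]
        push_cast
        simp
      · have hX : coeff (R := PowerSeries ℚ) (j+1) runGF
            = C (R := ℚ) (wgt (j+1)) * (X : PowerSeries ℚ) ^ j := by
          rcases Nat.eq_zero_or_pos j with hj0 | hj0
          · subst hj0; simp [runGF, coeff_mk, wgt]
          · have : ¬ (j + 1 ≤ 1) := by omega
            simp only [runGF, coeff_mk, wgt, if_neg (by omega : ¬ j + 1 = 0),
              if_neg (by omega : ¬ j + 1 = 1), if_neg this, Nat.add_sub_cancel]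
            rw [show ((2:PowerSeries ℚ)) = C (R := ℚ) 2 from (map_ofNat (C (R := ℚ)) 2).symm]
            norm_num
        rw [hX]
        have hexp : j + (n - (j+1) - k) = n - (k+1) := by omega
        rw [mul_mul_mul_comm, ← map_mul, ← pow_add, hexp, Nat.cast_mul]
    rw [Finset.sum_congr rfl hterm, ← Finset.sum_mul, ← map_sum]
    congr 2
    rw [Wc]
    push_cast
    ring

open PowerSeries in
lemma rhs_eval (n m : ℕ) :
    (∑ k ∈ Finset.range (n + 1),
        (k.factorial : ℚ) *
          (PowerSeries.coeff (R := ℚ) m) ((PowerSeries.coeff (R := PowerSeries ℚ) n) (runGF ^ k)))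
      = if m ≤ n then ((n-m).factorial * Wc n (n-m) : ℚ) else 0 := by
  have hc : ∀ k, (PowerSeries.coeff (R := ℚ) m) ((PowerSeries.coeff (R := PowerSeries ℚ) n) (runGF ^ k))
      = if m = n - k then (Wc n k : ℚ) else 0 := by
    intro k
    rw [runGF_pow_coeff, coeff_C_mul, coeff_X_pow]
    split <;> simp
  by_cases hm : m ≤ n
  · rw [if_pos hm, Finset.sum_eq_single (n - m)]
    · rw [hc, if_pos (by omega)]
    · intro k hk hne
      rw [Finset.mem_range] at hk
      rw [hc, if_neg (by omega), mul_zero]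
    · intro h
      exact absurd (Finset.mem_range.mpr (by omega)) h
  · rw [if_neg hm]
    apply Finset.sum_eq_zero
    intro k hk
    rw [Finset.mem_range] at hk
    rw [hc, if_neg (by omega), mul_zero]

open scoped Classical

/-- value of σ at position x, as a total ℕ function (junk `n` outside). -/
def fv {n : ℕ} (σ : Equiv.Perm (Fin n)) (x : ℕ) : ℕ :=
  if h : x < n then (σ ⟨x, h⟩).val else n

/-- marked set is OK: every element is a bond position. -/
def Mok (n : ℕ) (σ : Equiv.Perm (Fin n)) (M : Finset ℕ) : Prop :=
  ∀ p ∈ M, p + 1 < n ∧ (fv σ (p+1) = fv σ p + 1 ∨ fv σ p = fv σ (p+1) + 1)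

lemma fv_lt {n : ℕ} (σ : Equiv.Perm (Fin n)) {x : ℕ} (hx : x < n) : fv σ x < n := by
  rw [fv, dif_pos hx]; exact (σ ⟨x, hx⟩).isLt

lemma fv_inj {n : ℕ} (σ : Equiv.Perm (Fin n)) {x y : ℕ} (hx : x < n) (hy : y < n)
    (h : fv σ x = fv σ y) : x = y := by
  rw [fv, dif_pos hx, fv, dif_pos hy] at h
  have := σ.injective (Fin.ext h : σ ⟨x, hx⟩ = σ ⟨y, hy⟩)
  exact congrArg Fin.val this

def maxPos (n : ℕ) (σ : Equiv.Perm (Fin n)) : ℕ :=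
  if h : 0 < n then (σ.symm ⟨n-1, by omega⟩).val else 0

lemma maxPos_lt {n : ℕ} (hn : 0 < n) (σ : Equiv.Perm (Fin n)) : maxPos n σ < n := by
  rw [maxPos, dif_pos hn]; exact (σ.symm _).isLt

lemma fv_maxPos {n : ℕ} (hn : 0 < n) (σ : Equiv.Perm (Fin n)) : fv σ (maxPos n σ) = n - 1 := by
  rw [maxPos, dif_pos hn, fv, dif_pos (σ.symm _).isLt]
  have : σ (σ.symm ⟨n-1, by omega⟩) = ⟨n-1, by omega⟩ := σ.apply_symm_apply _
  rw [show (⟨((σ.symm ⟨n-1, by omega⟩ : Fin n) : ℕ), _⟩ : Fin n) = σ.symm ⟨n-1, by omega⟩ from rfl, this]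

def blockL (M : Finset ℕ) (t : ℕ) : ℕ :=
  Nat.find (⟨t, fun q h1 h2 => absurd (h1.trans_lt h2) (lt_irrefl t)⟩ :
    ∃ a, ∀ q, a ≤ q → q < t → q ∈ M)

lemma blockL_le (M : Finset ℕ) (t : ℕ) : blockL M t ≤ t :=
  Nat.find_le (fun q h1 h2 => absurd (h1.trans_lt h2) (lt_irrefl t))

lemma blockL_marks (M : Finset ℕ) (t : ℕ) :
    ∀ q, blockL M t ≤ q → q < t → q ∈ M :=
  Nat.find_spec (⟨t, fun q h1 h2 => absurd (h1.trans_lt h2) (lt_irrefl t)⟩ :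
    ∃ a, ∀ q, a ≤ q → q < t → q ∈ M)

lemma blockL_min (M : Finset ℕ) (t : ℕ) (h : 0 < blockL M t) : blockL M t - 1 ∉ M := by
  intro hmem
  have hlt : blockL M t - 1 < blockL M t := by omega
  have := Nat.find_min (⟨t, fun q h1 h2 => absurd (h1.trans_lt h2) (lt_irrefl t)⟩ :
    ∃ a, ∀ q, a ≤ q → q < t → q ∈ M) hlt
  push_neg at this
  obtain ⟨q, hq1, hq2, hq3⟩ := this
  have : blockL M t ≤ q ∨ q = blockL M t - 1 := by omega
  rcases this with h' | h'
  · exact hq3 (blockL_marks M t q h' hq2)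
  · exact hq3 (h' ▸ hmem)

def blockR (n : ℕ) (M : Finset ℕ) (t : ℕ) : ℕ :=
  t + Nat.findGreatest (fun r => ∀ i, i < r → t + i ∈ M) (n - 1 - t)

lemma le_blockR (n : ℕ) (M : Finset ℕ) (t : ℕ) : t ≤ blockR n M t := Nat.le_add_right _ _

lemma blockR_le (n : ℕ) (M : Finset ℕ) (t : ℕ) (ht : t ≤ n - 1) : blockR n M t ≤ n - 1 := by
  have := Nat.findGreatest_le (P := fun r => ∀ i, i < r → t + i ∈ M) (n - 1 - t)
  rw [blockR]; omega

lemma blockR_marks (n : ℕ) (M : Finset ℕ) (t : ℕ) :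
    ∀ q, t ≤ q → q < blockR n M t → q ∈ M := by
  intro q h1 h2
  have hspec : ∀ i, i < Nat.findGreatest (fun r => ∀ i, i < r → t + i ∈ M) (n - 1 - t) →
      t + i ∈ M :=
    Nat.findGreatest_spec (P := fun r => ∀ i, i < r → t + i ∈ M) (m := 0) (Nat.zero_le _)
      (fun i hi => absurd hi (Nat.not_lt_zero i))
  have := hspec (q - t) (by rw [blockR] at h2; omega)
  rwa [show t + (q - t) = q by omega] at this

lemma blockR_not_mem (n : ℕ) (M : Finset ℕ) (t : ℕ) (ht : t ≤ n - 1)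
    (hM : ∀ p ∈ M, p + 1 < n) : blockR n M t ∉ M := by
  intro hmem
  have hb : blockR n M t = t + Nat.findGreatest (fun r => ∀ i, i < r → t + i ∈ M) (n - 1 - t) :=
    rfl
  set r := Nat.findGreatest (fun r => ∀ i, i < r → t + i ∈ M) (n - 1 - t) with hr
  have hbound : t + r + 1 < n := by rw [hb] at hmem; exact hM _ hmem
  have hgr : ¬ (∀ i, i < r + 1 → t + i ∈ M) :=
    Nat.findGreatest_is_greatest (P := fun r => ∀ i, i < r → t + i ∈ M) (n := n - 1 - t)
      (k := r + 1) (by omega) (by omega)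
  apply hgr
  intro i hi
  rcases Nat.lt_or_ge i r with h' | h'
  · exact blockR_marks n M t (t + i) (by omega) (by rw [hb]; omega)
  · have : i = r := by omega
    rw [this, ← hb]; exact hmem

/-- A maximal chain of bonds is a monotone run. -/
lemma run_mono {n : ℕ} (σ : Equiv.Perm (Fin n)) (a s : ℕ) (han : a + s ≤ n)
    (hbond : ∀ i, i + 1 < s →
      fv σ (a+i+1) = fv σ (a+i) + 1 ∨ fv σ (a+i) = fv σ (a+i+1) + 1) :
    (∀ i, i < s → fv σ (a+i) = fv σ a + i) ∨ (∀ i, i < s → fv σ (a+i) + i = fv σ a) := by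
  rcases Nat.lt_or_ge s 2 with hs | hs
  · left; intro i hi
    have : i = 0 := by omega
    subst this; simp
  rcases hbond 0 (by omega) with hup | hdown
  · left
    intro i hi
    induction i using Nat.strong_induction_on with
    | _ i ih =>
      match i, hi with
      | 0, _ => simp
      | 1, _ => simp only [Nat.add_zero] at hup; omega
      | (j+2), hj =>
        have h1 : fv σ (a+(j+1)) = fv σ a + (j+1) := ih (j+1) (by omega) (by omega)
        have h0 : fv σ (a+j) = fv σ a + j := ih j (by omega) (by omega)
        rcases hbond (j+1) (by omega) with h | h
        · rw [show a+(j+2) = a+(j+1)+1 by omega, h, h1]; omega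
        · rw [h1] at h
          have : fv σ (a+(j+1)+1) = fv σ (a+j) := by omega
          have := fv_inj σ (by omega) (by omega) this
          omega
  · right
    intro i hi
    induction i using Nat.strong_induction_on with
    | _ i ih =>
      match i, hi with
      | 0, _ => simp
      | 1, _ => simp only [Nat.add_zero] at hdown; omega
      | (j+2), hj =>
        have h1 : fv σ (a+(j+1)) + (j+1) = fv σ a := ih (j+1) (by omega) (by omega)
        have h0 : fv σ (a+j) + j = fv σ a := ih j (by omega) (by omega)
        rcases hbond (j+1) (by omega) with h | h
        · have : fv σ (a+(j+1)+1) = fv σ (a+j) := by omega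
          have := fv_inj σ (by omega) (by omega) this
          omega
        · rw [show a+(j+2) = a+(j+1)+1 by omega]; omega

def topSize (n : ℕ) (σ : Equiv.Perm (Fin n)) (M : Finset ℕ) : ℕ :=
  blockR n M (maxPos n σ) - blockL M (maxPos n σ) + 1

def dirOf (n : ℕ) (σ : Equiv.Perm (Fin n)) (M : Finset ℕ) : Bool :=
  decide (1 < topSize n σ M ∧ fv σ (blockL M (maxPos n σ)) = n - 1)

/-- Master structural lemma for the block containing the maximum. -/
lemma top_block_run {n : ℕ} (hn : 0 < n) (σ : Equiv.Perm (Fin n)) (M : Finset ℕ)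
    (hM : Mok n σ M) :
    ∀ i, i < topSize n σ M →
      fv σ (blockL M (maxPos n σ) + i)
        = (if dirOf n σ M then n - 1 - i else n - topSize n σ M + i) := by
  set t := maxPos n σ with htdef
  set a := blockL M t with hadef
  set b := blockR n M t with hbdef
  set s := topSize n σ M with hsdef
  have hat : a ≤ t := blockL_le M t
  have htb : t ≤ b := le_blockR n M t
  have htn : t < n := maxPos_lt hn σ
  have hbn : b ≤ n - 1 := blockR_le n M t (by omega)
  have hs : s = b - a + 1 := rfl
  have hmarks : ∀ q, a ≤ q → q < b → q ∈ M := by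
    intro q h1 h2
    rcases Nat.lt_or_ge q t with h | h
    · exact blockL_marks M t q h1 h
    · exact blockR_marks n M t q h h2
  have hbond : ∀ i, i + 1 < s →
      fv σ (a+i+1) = fv σ (a+i) + 1 ∨ fv σ (a+i) = fv σ (a+i+1) + 1 := by
    intro i hi
    exact (hM (a+i) (hmarks (a+i) (by omega) (by omega))).2
  have hft : fv σ t = n - 1 := fv_maxPos hn σ
  rcases run_mono σ a s (by omega) hbond with hup | hdown
  · -- increasing: t = b, fv a = n - s, dir = false
    have h1 : fv σ t = fv σ a + (t - a) := by
      have := hup (t - a) (by omega)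
      rwa [show a + (t - a) = t by omega] at this
    have h2 : fv σ b = fv σ a + (b - a) := by
      have := hup (b - a) (by omega)
      rwa [show a + (b - a) = b by omega] at this
    have hfb : fv σ b < n := fv_lt σ (by omega)
    have htb' : t = b := by
      have := fv_inj σ htn (by omega) (show fv σ t = fv σ b by omega)
      omega
    have hfa : fv σ a = n - s := by omega
    have hdir : dirOf n σ M = false := by
      rw [dirOf, decide_eq_false_iff_not, ← htdef, ← hadef, ← hsdef]
      rintro ⟨hs2, hfa'⟩
      omega
    intro i hi
    rw [hdir, if_neg (by simp)]
    rw [hup i hi, hfa]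
  · -- decreasing: t = a, fv a = n - 1
    have h1 : fv σ t + (t - a) = fv σ a := by
      have := hdown (t - a) (by omega)
      rwa [show a + (t - a) = t by omega] at this
    have hfa : fv σ a < n := fv_lt σ (by omega)
    have hta : t = a := by omega
    have hfa' : fv σ a = n - 1 := by omega
    intro i hi
    have hval : fv σ (a + i) + i = n - 1 := by rw [hdown i hi, hfa']
    rcases eq_or_ne s 1 with hs1 | hs1
    · have hi0 : i = 0 := by omega
      subst hi0
      simp only [Nat.add_zero] at hval ⊢
      rcases Bool.eq_false_or_eq_true (dirOf n σ M) with hD | hD <;> rw [hD] <;> simp <;> omega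
    · have hdir : dirOf n σ M = true := by
        rw [dirOf, decide_eq_true_iff, ← htdef, ← hadef, ← hsdef]
        exact ⟨by omega, hfa'⟩
      rw [hdir, if_pos rfl]
      omega

/-- Bundled facts about the top block. -/
lemma block_facts {n : ℕ} (hn : 0 < n) (σ : Equiv.Perm (Fin n)) (M : Finset ℕ)
    (hM : Mok n σ M) :
    blockL M (maxPos n σ) + topSize n σ M ≤ n ∧
    blockL M (maxPos n σ) + topSize n σ M = blockR n M (maxPos n σ) + 1 ∧
    1 ≤ topSize n σ M ∧
    (∀ q, blockL M (maxPos n σ) ≤ q → q < blockR n M (maxPos n σ) → q ∈ M) ∧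
    (∀ q ∈ M, q + 1 < blockL M (maxPos n σ) ∨
      (blockL M (maxPos n σ) ≤ q ∧ q < blockR n M (maxPos n σ)) ∨
      blockR n M (maxPos n σ) < q) ∧
    (∀ x, x < n → (x < blockL M (maxPos n σ) ∨ blockR n M (maxPos n σ) < x) →
      fv σ x < n - topSize n σ M) := by
  set t := maxPos n σ with htdef
  set a := blockL M t with hadef
  set b := blockR n M t with hbdef
  set s := topSize n σ M with hsdef
  have hat : a ≤ t := blockL_le M t
  have htb : t ≤ b := le_blockR n M t
  have htn : t < n := maxPos_lt hn σ
  have hbn : b ≤ n - 1 := blockR_le n M t (by omega)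
  have hs : s = b - a + 1 := rfl
  have hmarks : ∀ q, a ≤ q → q < b → q ∈ M := by
    intro q h1 h2
    rcases Nat.lt_or_ge q t with h | h
    · exact blockL_marks M t q h1 h
    · exact blockR_marks n M t q h h2
  have hbound : ∀ p ∈ M, p + 1 < n := fun p hp => (hM p hp).1
  have hbnot : b ∉ M := blockR_not_mem n M t (by omega) hbound
  have hanot : 0 < a → a - 1 ∉ M := fun h => blockL_min M t h
  have htri : ∀ q ∈ M, q + 1 < a ∨ (a ≤ q ∧ q < b) ∨ b < q := by
    intro q hq
    rcases Nat.lt_or_ge q a with h | h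
    · rcases Nat.eq_or_lt_of_le (Nat.succ_le_of_lt h) with h' | h'
      · exfalso
        exact hanot (by omega) (by rw [show a - 1 = q by omega]; exact hq)
      · left; omega
    · rcases Nat.lt_or_ge q b with h' | h'
      · right; left; exact ⟨h, h'⟩
      · rcases Nat.eq_or_lt_of_le h' with h'' | h''
        · exact absurd (h'' ▸ hq) hbnot
        · right; right; omega
  have hrun := top_block_run hn σ M hM
  rw [← htdef, ← hadef, ← hsdef] at hrun
  have houtside : ∀ x, x < n → (x < a ∨ b < x) → fv σ x < n - s := by
    intro x hx hxab
    by_contra hge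
    push_neg at hge
    have hxn : fv σ x < n := fv_lt σ hx
    set i : ℕ := if dirOf n σ M then n - 1 - fv σ x else fv σ x - (n - s) with hidef
    have his : i < s := by rw [hidef]; split <;> omega
    have heq : fv σ (a + i) = fv σ x := by
      rw [hrun i his, hidef]
      rcases Bool.eq_false_or_eq_true (dirOf n σ M) with hD | hD <;> rw [hD] <;> simp <;> omega
    have := fv_inj σ (by omega) hx heq
    omega
  exact ⟨by omega, by omega, by omega, hmarks, htri, houtside⟩

/-- safe constructor of a permutation from an injective bounded ℕ-function. -/
noncomputable def mkPerm (N : ℕ) (f : ℕ → ℕ) : Equiv.Perm (Fin N) :=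
  if h : (∀ x, x < N → f x < N) ∧ (∀ x, x < N → ∀ y, y < N → f x = f y → x = y) then
    Equiv.ofBijective (fun x : Fin N => (⟨f x.val, h.1 x.val x.isLt⟩ : Fin N))
      (Finite.injective_iff_bijective.mp fun x y hxy =>
        Fin.ext (h.2 x.val x.isLt y.val y.isLt (congrArg Fin.val hxy)))
  else 1

lemma mkPerm_fv {N : ℕ} {f : ℕ → ℕ} (h1 : ∀ x, x < N → f x < N)
    (h2 : ∀ x, x < N → ∀ y, y < N → f x = f y → x = y) {x : ℕ} (hx : x < N) :
    fv (mkPerm N f) x = f x := by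
  rw [fv, dif_pos hx, mkPerm, dif_pos ⟨h1, h2⟩]
  rfl

def delF (p s : ℕ) (f : ℕ → ℕ) : ℕ → ℕ := fun x => if x < p then f x else f (x + s)

def insF (n p s : ℕ) (dir : Bool) (f : ℕ → ℕ) : ℕ → ℕ := fun x =>
  if x < p then f x
  else if x < p + s then (if dir then n - 1 - (x - p) else n - s + (x - p))
  else f (x - s)

def delM (p s : ℕ) (M : Finset ℕ) : Finset ℕ :=
  M.filter (fun q => q + 1 < p) ∪ (M.filter (fun q => p + s ≤ q)).image (fun q => q - s)

def insM (p s : ℕ) (M : Finset ℕ) : Finset ℕ :=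
  M.filter (fun q => q + 1 < p) ∪ Finset.Ico p (p + s - 1) ∪
    (M.filter (fun q => p ≤ q)).image (fun q => q + s)

lemma mem_delM {p s : ℕ} {M : Finset ℕ} (hs : 1 ≤ s) {q : ℕ} :
    q ∈ delM p s M ↔ (q + 1 < p ∧ q ∈ M) ∨ (p ≤ q ∧ q + s ∈ M) := by
  rw [delM, Finset.mem_union, Finset.mem_filter, Finset.mem_image]
  constructor
  · rintro (⟨h1, h2⟩ | ⟨q0, hq0, rfl⟩)
    · exact Or.inl ⟨h2, h1⟩
    · rw [Finset.mem_filter] at hq0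
      right
      constructor
      · omega
      · rw [show q0 - s + s = q0 by omega]; exact hq0.1
  · rintro (⟨h1, h2⟩ | ⟨h1, h2⟩)
    · exact Or.inl ⟨h2, h1⟩
    · right
      exact ⟨q + s, Finset.mem_filter.mpr ⟨h2, by omega⟩, by omega⟩

lemma mem_insM {p s : ℕ} {M : Finset ℕ} {q : ℕ} :
    q ∈ insM p s M ↔ (q + 1 < p ∧ q ∈ M) ∨ (p ≤ q ∧ q + 1 < p + s) ∨
      (p + s ≤ q ∧ q - s ∈ M) := by
  rw [insM, Finset.mem_union, Finset.mem_union, Finset.mem_filter, Finset.mem_Ico,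
    Finset.mem_image]
  constructor
  · rintro ((⟨h1, h2⟩ | ⟨h1, h2⟩) | ⟨q0, hq0, rfl⟩)
    · exact Or.inl ⟨h2, h1⟩
    · right; left; omega
    · rw [Finset.mem_filter] at hq0
      right; right
      refine ⟨by omega, ?_⟩
      rw [show q0 + s - s = q0 by omega]
      exact hq0.1
  · rintro (⟨h1, h2⟩ | ⟨h1, h2⟩ | ⟨h1, h2⟩)
    · exact Or.inl (Or.inl ⟨h2, h1⟩)
    · left; right; omega
    · right
      exact ⟨q - s, Finset.mem_filter.mpr ⟨h2, by omega⟩, by omega⟩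

noncomputable def AF (n m : ℕ) : Finset (Equiv.Perm (Fin n) × Finset ℕ) :=
  (Finset.univ ×ˢ (Finset.range n).powerset).filter fun x => Mok n x.1 x.2 ∧ x.2.card = m

lemma mem_AF {n m : ℕ} {x : Equiv.Perm (Fin n) × Finset ℕ} :
    x ∈ AF n m ↔ Mok n x.1 x.2 ∧ x.2.card = m := by
  rw [AF, Finset.mem_filter, Finset.mem_product, Finset.mem_powerset]
  constructor
  · rintro ⟨_, h⟩; exact h
  · rintro ⟨h1, h2⟩
    refine ⟨⟨Finset.mem_univ _, ?_⟩, h1, h2⟩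
    intro q hq
    rw [Finset.mem_range]
    have := (h1 q hq).1
    omega

noncomputable def BF (n m s : ℕ) :
    Finset ((Bool × ℕ) × (Equiv.Perm (Fin (n-s)) × Finset ℕ)) :=
  ((Finset.univ ×ˢ Finset.range (n - s + 1)) ×ˢ AF (n-s) (m - (s-1))).filter fun y =>
    (s = 1 → y.1.1 = false) ∧ (y.1.2 = 0 ∨ y.1.2 - 1 ∉ y.2.2) ∧ y.2.2.card + (s-1) = m

lemma mem_BF {n m s : ℕ} {y : (Bool × ℕ) × (Equiv.Perm (Fin (n-s)) × Finset ℕ)} :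
    y ∈ BF n m s ↔ y.1.2 < n - s + 1 ∧ Mok (n-s) y.2.1 y.2.2 ∧
      (s = 1 → y.1.1 = false) ∧ (y.1.2 = 0 ∨ y.1.2 - 1 ∉ y.2.2) ∧
      y.2.2.card + (s-1) = m := by
  rw [BF, Finset.mem_filter, Finset.mem_product, Finset.mem_product, Finset.mem_range, mem_AF]
  constructor
  · rintro ⟨⟨⟨_, h1⟩, h2, _⟩, h4, h5, h6⟩
    exact ⟨h1, h2, h4, h5, h6⟩
  · rintro ⟨h1, h2, h4, h5, h6⟩
    exact ⟨⟨⟨Finset.mem_univ _, h1⟩, h2, by omega⟩, h4, h5, h6⟩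

section DelIns

variable {n m s : ℕ}

/-- The deletion map lands in `BF`. -/
lemma del_mem (hn : 0 < n) (σ : Equiv.Perm (Fin n)) (M : Finset ℕ)
    (hMok : Mok n σ M) (hcard : M.card = m) (hts : topSize n σ M = s) :
    ((dirOf n σ M, blockL M (maxPos n σ)),
      (mkPerm (n-s) (delF (blockL M (maxPos n σ)) s (fv σ)),
       delM (blockL M (maxPos n σ)) s M)) ∈ BF n m s := by
  obtain ⟨hbf1, hbf2, hbf3, hmarks, htri, hout⟩ := block_facts hn σ M hMok
  set t := maxPos n σ
  set a := blockL M t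
  set b := blockR n M t
  rw [hts] at hbf1 hbf2 hbf3 hout
  have hs1 : 1 ≤ s := hbf3
  have hrun := top_block_run hn σ M hMok
  rw [hts] at hrun
  -- the deleted function is bounded and injective
  have hf1 : ∀ x, x < n - s → delF a s (fv σ) x < n - s := by
    intro x hx
    rw [delF]
    split
    · exact hout x (by omega) (by omega)
    · exact hout (x + s) (by omega) (by omega)
  have hf2 : ∀ x, x < n - s → ∀ y, y < n - s → delF a s (fv σ) x = delF a s (fv σ) y →
      x = y := by
    intro x hx y hy hxy
    simp only [delF] at hxy
    split at hxy <;> split at hxy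
    · exact fv_inj σ (by omega) (by omega) hxy
    · have := fv_inj σ (by omega) (by omega) hxy; omega
    · have := fv_inj σ (by omega) (by omega) hxy; omega
    · have := fv_inj σ (by omega) (by omega) hxy; omega
  have hfv : ∀ x, x < n - s →
      fv (mkPerm (n-s) (delF a s (fv σ))) x = delF a s (fv σ) x :=
    fun x hx => mkPerm_fv hf1 hf2 hx
  rw [mem_BF]
  dsimp only
  refine ⟨by omega, ?_, ?_, ?_, ?_⟩
  · -- Mok
    intro q hq
    rw [mem_delM hs1] at hq
    rcases hq with ⟨h1, h2⟩ | ⟨h1, h2⟩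
    · obtain ⟨hb1, hb2⟩ := hMok q h2
      have e1 : fv (mkPerm (n-s) (delF a s (fv σ))) q = fv σ q := by
        rw [hfv q (by omega), delF, if_pos (by omega)]
      have e2 : fv (mkPerm (n-s) (delF a s (fv σ))) (q+1) = fv σ (q+1) := by
        rw [hfv (q+1) (by omega), delF, if_pos (by omega)]
      exact ⟨by omega, by rw [e1, e2]; exact hb2⟩
    · obtain ⟨hb1, hb2⟩ := hMok (q+s) h2
      have e1 : fv (mkPerm (n-s) (delF a s (fv σ))) q = fv σ (q+s) := by
        rw [hfv q (by omega), delF, if_neg (by omega)]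
      have e2 : fv (mkPerm (n-s) (delF a s (fv σ))) (q+1) = fv σ (q+s+1) := by
        rw [hfv (q+1) (by omega), delF, if_neg (by omega)]
        congr 1
        omega
      exact ⟨by omega, by rw [e1, e2]; exact hb2⟩
  · -- dir constraint
    intro hseq
    rw [dirOf, hts, decide_eq_false_iff_not]
    rintro ⟨h1, _⟩
    omega
  · -- p constraint
    rcases Nat.eq_zero_or_pos a with h | h
    · exact Or.inl h
    · right
      rw [mem_delM hs1]
      rintro (⟨h1, _⟩ | ⟨h1, _⟩) <;> omega
  · -- cardinality
    have key : M.card = (M.filter (fun q => q + 1 < a)).card + (s - 1) +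
        (M.filter (fun q => a + s ≤ q)).card := by
      have h1 := Finset.card_filter_add_card_filter_not
        (s := M) (p := fun q => q + 1 < a)
      have h2 := Finset.card_filter_add_card_filter_not
        (s := M.filter (fun q => ¬ (q + 1 < a))) (p := fun q => q < b)
      rw [Finset.filter_filter, Finset.filter_filter] at h2
      have hmid : M.filter (fun q => ¬ (q + 1 < a) ∧ q < b) = Finset.Ico a b := by
        ext q
        rw [Finset.mem_filter, Finset.mem_Ico]
        constructor
        · rintro ⟨hqM, hq1, hq2⟩
          rcases htri q hqM with h | h | h <;> omega
        · rintro ⟨hq1, hq2⟩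
          exact ⟨hmarks q hq1 hq2, by omega, hq2⟩
      have hhigh : M.filter (fun q => ¬ (q + 1 < a) ∧ ¬ (q < b)) =
          M.filter (fun q => a + s ≤ q) := by
        ext q
        rw [Finset.mem_filter, Finset.mem_filter]
        constructor
        · rintro ⟨hqM, hq1, hq2⟩
          rcases htri q hqM with h | h | h <;> first | omega | exact ⟨hqM, by omega⟩
        · rintro ⟨hqM, hq⟩
          exact ⟨hqM, by omega, by omega⟩
      rw [hmid, hhigh, Nat.card_Ico] at h2
      omega
    have himage : ((M.filter (fun q => a + s ≤ q)).image (fun q => q - s)).card =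
        (M.filter (fun q => a + s ≤ q)).card := by
      apply Finset.card_image_of_injOn
      intro x hx y hy hxy
      rw [Finset.mem_coe, Finset.mem_filter] at hx hy
      have hxy' : x - s = y - s := hxy
      omega
    have hdisj : Disjoint (M.filter (fun q => q + 1 < a))
        ((M.filter (fun q => a + s ≤ q)).image (fun q => q - s)) := by
      rw [Finset.disjoint_left]
      intro q hq1 hq2
      rw [Finset.mem_filter] at hq1
      rw [Finset.mem_image] at hq2
      obtain ⟨q0, hq0, rfl⟩ := hq2
      rw [Finset.mem_filter] at hq0
      omega
    rw [delM, Finset.card_union_of_disjoint hdisj, himage]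
    omega

end DelIns

lemma perm_ext_fv {n : ℕ} {σ1 σ2 : Equiv.Perm (Fin n)}
    (h : ∀ x, x < n → fv σ1 x = fv σ2 x) : σ1 = σ2 := by
  apply Equiv.ext
  intro x
  apply Fin.ext
  have := h x.val x.isLt
  rwa [fv, dif_pos x.isLt, fv, dif_pos x.isLt] at this

lemma insF_lt {n p s : ℕ} {dir : Bool} {g : ℕ → ℕ} {x : ℕ} (hx : x < p) :
    insF n p s dir g x = g x := by
  rw [insF]; simp only [if_pos hx]

lemma insF_mid {n p s : ℕ} {dir : Bool} {g : ℕ → ℕ} {x : ℕ} (h1 : p ≤ x) (h2 : x < p + s) :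
    insF n p s dir g x = (if dir then n - 1 - (x - p) else n - s + (x - p)) := by
  rw [insF]; simp only [if_neg (by omega : ¬ x < p), if_pos h2]

lemma insF_ge {n p s : ℕ} {dir : Bool} {g : ℕ → ℕ} {x : ℕ} (h1 : p + s ≤ x) :
    insF n p s dir g x = g (x - s) := by
  rw [insF]; simp only [if_neg (by omega : ¬ x < p), if_neg (by omega : ¬ x < p + s)]

section Ins

variable {n m s : ℕ} (hn : 0 < n) (hs1 : 1 ≤ s) (hsn : s ≤ n)
  (dir : Bool) (p : ℕ) (σ' : Equiv.Perm (Fin (n-s))) (M' : Finset ℕ)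
  (hp : p < n - s + 1) (hMok' : Mok (n-s) σ' M')
  (hdir1 : s = 1 → dir = false) (hpc : p = 0 ∨ p - 1 ∉ M')
  (hc : M'.card + (s-1) = m)

include hn hs1 hsn hp hMok' hdir1 hpc hc

lemma ins_facts :
    (∀ x, x < n → fv (mkPerm n (insF n p s dir (fv σ'))) x = insF n p s dir (fv σ') x) ∧
    ((mkPerm n (insF n p s dir (fv σ')), insM p s M') ∈ AF n m ∧
      topSize n (mkPerm n (insF n p s dir (fv σ'))) (insM p s M') = s) ∧
    (blockL (insM p s M') (maxPos n (mkPerm n (insF n p s dir (fv σ')))) = p ∧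
      dirOf n (mkPerm n (insF n p s dir (fv σ'))) (insM p s M') = dir) := by
  set f := insF n p s dir (fv σ') with hfdef
  -- value range facts
  have hval1 : ∀ x, x < p → f x = fv σ' x ∧ f x < n - s := by
    intro x hx
    have hb : fv σ' x < n - s := fv_lt σ' (by omega)
    rw [hfdef, insF_lt hx]
    exact ⟨rfl, hb⟩
  have hval2 : ∀ x, p ≤ x → x < p + s →
      f x = (if dir then n - 1 - (x - p) else n - s + (x - p)) ∧
      n - s ≤ f x ∧ f x < n := by
    intro x hx1 hx2
    rw [hfdef, insF_mid hx1 hx2]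
    refine ⟨rfl, ?_, ?_⟩ <;> split <;> omega
  have hval3 : ∀ x, p + s ≤ x → x < n → f x = fv σ' (x - s) ∧ f x < n - s := by
    intro x hx1 hx2
    have hb : fv σ' (x - s) < n - s := fv_lt σ' (by omega)
    rw [hfdef, insF_ge hx1]
    exact ⟨rfl, hb⟩
  have hf1 : ∀ x, x < n → f x < n := by
    intro x hx
    rcases Nat.lt_or_ge x p with h | h
    · have := (hval1 x h).2; omega
    rcases Nat.lt_or_ge x (p + s) with h' | h'
    · exact (hval2 x h h').2.2
    · have := (hval3 x h' hx).2; omega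
  have hf2 : ∀ x, x < n → ∀ y, y < n → f x = f y → x = y := by
    intro x hx y hy hxy
    rcases Nat.lt_or_ge x p with h1 | h1
    · rcases Nat.lt_or_ge y p with h3 | h3
      · rw [(hval1 x h1).1, (hval1 y h3).1] at hxy
        exact fv_inj σ' (by omega) (by omega) hxy
      · rcases Nat.lt_or_ge y (p+s) with h4 | h4
        · have := (hval1 x h1).2
          have := (hval2 y h3 h4).2.1
          omega
        · rw [(hval1 x h1).1, (hval3 y h4 hy).1] at hxy
          have := fv_inj σ' (by omega) (by omega) hxy
          omega
    · rcases Nat.lt_or_ge x (p+s) with h2 | h2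
      · rcases Nat.lt_or_ge y p with h3 | h3
        · have := (hval2 x h1 h2).2.1
          have := (hval1 y h3).2
          omega
        · rcases Nat.lt_or_ge y (p+s) with h4 | h4
          · have e1 := (hval2 x h1 h2).1
            have e2 := (hval2 y h3 h4).1
            rw [e1, e2] at hxy
            rcases Bool.eq_false_or_eq_true dir with hD | hD <;> rw [hD] at hxy <;>
              simp at hxy <;> omega
          · have := (hval2 x h1 h2).2.1
            have := (hval3 y h4 hy).2
            omega
      · rcases Nat.lt_or_ge y p with h3 | h3
        · rw [(hval3 x h2 hx).1, (hval1 y h3).1] at hxy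
          have := fv_inj σ' (by omega) (by omega) hxy
          omega
        · rcases Nat.lt_or_ge y (p+s) with h4 | h4
          · have := (hval3 x h2 hx).2
            have := (hval2 y h3 h4).2.1
            omega
          · rw [(hval3 x h2 hx).1, (hval3 y h4 hy).1] at hxy
            have := fv_inj σ' (by omega) (by omega) hxy
            omega
  have hfv : ∀ x, x < n → fv (mkPerm n f) x = f x := fun x hx => mkPerm_fv hf1 hf2 hx
  have hnotmem : p + s - 1 ∉ insM p s M' := by
    rw [mem_insM]; rintro (⟨h1, _⟩ | ⟨_, h2⟩ | ⟨h1, _⟩) <;> omega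
  have hnotmem2 : 0 < p → p - 1 ∉ insM p s M' := by
    intro hp0
    rw [mem_insM]
    rintro (⟨h1, _⟩ | ⟨h1, _⟩ | ⟨h1, _⟩) <;> omega
  have hmid_mem : ∀ q, p ≤ q → q < p + s - 1 → q ∈ insM p s M' := by
    intro q h1 h2; rw [mem_insM]; right; left; omega
  set tpos := (if dir then p else p + s - 1) with htpos
  have htp1 : p ≤ tpos ∧ tpos ≤ p + s - 1 ∧ tpos < n := by
    rw [htpos]; split <;> omega
  have hfmax : fv (mkPerm n f) tpos = n - 1 := by
    have h := (hval2 tpos (by omega) (by omega)).1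
    rw [hfv tpos (by omega), h]
    rcases Bool.eq_false_or_eq_true dir with hD | hD <;> rw [hD] at htpos ⊢ <;>
      simp only [if_true, Bool.false_eq_true, if_false] at htpos ⊢ <;> omega
  have hmax : maxPos n (mkPerm n f) = tpos := by
    rw [maxPos, dif_pos hn]
    have heq : (mkPerm n f) ⟨tpos, by omega⟩ = ⟨n-1, by omega⟩ := by
      apply Fin.ext
      have h2 := hfmax
      rwa [fv, dif_pos (by omega : tpos < n)] at h2
    rw [← heq, Equiv.symm_apply_apply]
  have hBL : blockL (insM p s M') tpos = p := by
    rw [blockL, Nat.find_eq_iff]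
    constructor
    · intro q h1 h2
      exact hmid_mem q h1 (by omega)
    · intro k hk hP
      exact hnotmem2 (by omega) (hP (p-1) (by omega) (by omega))
  have hBR : blockR n (insM p s M') tpos = p + s - 1 := by
    rw [blockR]
    have hfg : Nat.findGreatest (fun r => ∀ i, i < r → tpos + i ∈ insM p s M') (n - 1 - tpos)
        = p + s - 1 - tpos := by
      rw [Nat.findGreatest_eq_iff]
      refine ⟨by omega, fun _ => ?_, ?_⟩
      · intro i hi
        exact hmid_mem (tpos + i) (by omega) (by omega)
      · intro j hj1 hj2 hP
        have := hP (p + s - 1 - tpos) (by omega)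
        rw [show tpos + (p+s-1-tpos) = p+s-1 by omega] at this
        exact hnotmem this
    omega
  have hts : topSize n (mkPerm n f) (insM p s M') = s := by
    rw [topSize, hmax, hBL, hBR]; omega
  have hfp : fv (mkPerm n f) p = (if dir then n - 1 else n - s) := by
    rw [hfv p (by omega), (hval2 p (by omega) (by omega)).1]
    split <;> omega
  have hdir : dirOf n (mkPerm n f) (insM p s M') = dir := by
    rw [dirOf, hmax, hBL, hts, hfp]
    rcases Bool.eq_false_or_eq_true dir with hD | hD <;> rw [hD] <;> simp only [if_true,
      Bool.false_eq_true, if_false]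
    · rw [decide_eq_true_iff]
      have hs2 : 1 < s := by
        rcases eq_or_ne s 1 with h | h
        · rw [hdir1 h] at hD; exact absurd hD (by simp)
        · omega
      exact ⟨hs2, trivial⟩
    · rw [decide_eq_false_iff_not]
      rintro ⟨h1, h2⟩
      omega
  refine ⟨hfv, ⟨?_, ?_⟩, ?_⟩
  · -- membership in AF n m
    rw [mem_AF]
    constructor
    · -- Mok
      intro q hq
      rw [mem_insM] at hq
      rcases hq with ⟨h1, h2⟩ | ⟨h1, h2⟩ | ⟨h1, h2⟩
      · obtain ⟨hb1, hb2⟩ := hMok' q h2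
        have e1 : fv (mkPerm n f) q = fv σ' q := by
          rw [hfv q (by omega)]; exact (hval1 q (by omega)).1
        have e2 : fv (mkPerm n f) (q+1) = fv σ' (q+1) := by
          rw [hfv (q+1) (by omega)]; exact (hval1 (q+1) (by omega)).1
        exact ⟨by omega, by rw [e1, e2]; exact hb2⟩
      · -- inside the block
        have e1 := (hval2 q (by omega) (by omega)).1
        have e2 := (hval2 (q+1) (by omega) (by omega)).1
        refine ⟨by omega, ?_⟩
        rw [hfv q (by omega), hfv (q+1) (by omega), e1, e2]
        rcases Bool.eq_false_or_eq_true dir with hD | hD <;> rw [hD] <;> simp <;> omega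
      · obtain ⟨hb1, hb2⟩ := hMok' (q - s) h2
        have e1 : fv (mkPerm n f) q = fv σ' (q - s) := by
          rw [hfv q (by omega)]; exact (hval3 q (by omega) (by omega)).1
        have e2 : fv (mkPerm n f) (q+1) = fv σ' (q - s + 1) := by
          rw [hfv (q+1) (by omega)]
          have := (hval3 (q+1) (by omega) (by omega)).1
          rw [this, show q + 1 - s = q - s + 1 by omega]
        exact ⟨by omega, by rw [e1, e2]; exact hb2⟩
    · -- cardinality
      have hsplit : (M'.filter (fun q => q + 1 < p)).card +
          (M'.filter (fun q => p ≤ q)).card = M'.card := by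
        have h1 := Finset.card_filter_add_card_filter_not
          (s := M') (p := fun q => q + 1 < p)
        have : M'.filter (fun q => ¬ (q + 1 < p)) = M'.filter (fun q => p ≤ q) := by
          ext q
          rw [Finset.mem_filter, Finset.mem_filter]
          constructor
          · rintro ⟨hqM, hq⟩
            refine ⟨hqM, ?_⟩
            rcases hpc with h | h
            · omega
            · have : q ≠ p - 1 := fun hq' => h (hq' ▸ hqM)
              omega
          · rintro ⟨hqM, hq⟩
            exact ⟨hqM, by omega⟩
        rw [this] at h1
        exact h1
      have himg : ((M'.filter (fun q => p ≤ q)).image (fun q => q + s)).card =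
          (M'.filter (fun q => p ≤ q)).card := by
        apply Finset.card_image_of_injOn
        intro x _ y _ hxy
        have : x + s = y + s := hxy
        omega
      have hd1 : Disjoint (M'.filter (fun q => q + 1 < p)) (Finset.Ico p (p + s - 1)) := by
        rw [Finset.disjoint_left]
        intro q hq1 hq2
        rw [Finset.mem_filter] at hq1
        rw [Finset.mem_Ico] at hq2
        omega
      have hd2 : Disjoint (M'.filter (fun q => q + 1 < p) ∪ Finset.Ico p (p + s - 1))
          ((M'.filter (fun q => p ≤ q)).image (fun q => q + s)) := by
        rw [Finset.disjoint_left]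
        intro q hq1 hq2
        rw [Finset.mem_image] at hq2
        obtain ⟨q0, hq0, rfl⟩ := hq2
        rw [Finset.mem_filter] at hq0
        rw [Finset.mem_union, Finset.mem_filter, Finset.mem_Ico] at hq1
        rcases hq1 with ⟨_, h⟩ | ⟨_, h⟩ <;> omega
      rw [insM, Finset.card_union_of_disjoint hd2, Finset.card_union_of_disjoint hd1,
        Nat.card_Ico, himg]
      omega
  · exact hts
  · exact ⟨by rw [hmax]; exact hBL, hdir⟩

end Ins

lemma del_ins_id {n m s : ℕ} (hn : 0 < n) (σ : Equiv.Perm (Fin n)) (M : Finset ℕ)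
    (hMok : Mok n σ M) (hcard : M.card = m) (hts : topSize n σ M = s) :
    mkPerm n (insF n (blockL M (maxPos n σ)) s (dirOf n σ M)
      (fv (mkPerm (n-s) (delF (blockL M (maxPos n σ)) s (fv σ))))) = σ
    ∧ insM (blockL M (maxPos n σ)) s (delM (blockL M (maxPos n σ)) s M) = M := by
  obtain ⟨hbf1, hbf2, hbf3, hmarks, htri, hout⟩ := block_facts hn σ M hMok
  set t := maxPos n σ
  set a := blockL M t
  set b := blockR n M t
  rw [hts] at hbf1 hbf2 hbf3 hout
  have hs1 : 1 ≤ s := hbf3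
  have hrun := top_block_run hn σ M hMok
  rw [hts] at hrun
  have hf1 : ∀ x, x < n - s → delF a s (fv σ) x < n - s := by
    intro x hx
    rw [delF]
    split
    · exact hout x (by omega) (by omega)
    · exact hout (x + s) (by omega) (by omega)
  have hf2 : ∀ x, x < n - s → ∀ y, y < n - s → delF a s (fv σ) x = delF a s (fv σ) y →
      x = y := by
    intro x hx y hy hxy
    simp only [delF] at hxy
    split at hxy <;> split at hxy
    · exact fv_inj σ (by omega) (by omega) hxy
    · have := fv_inj σ (by omega) (by omega) hxy; omega
    · have := fv_inj σ (by omega) (by omega) hxy; omega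
    · have := fv_inj σ (by omega) (by omega) hxy; omega
  have hfv' : ∀ y, y < n - s →
      fv (mkPerm (n-s) (delF a s (fv σ))) y = delF a s (fv σ) y :=
    fun y hy => mkPerm_fv hf1 hf2 hy
  constructor
  · -- permutation round trip
    have hFeq : ∀ x, x < n →
        insF n a s (dirOf n σ M) (fv (mkPerm (n-s) (delF a s (fv σ)))) x = fv σ x := by
      intro x hx
      rcases Nat.lt_or_ge x a with h1 | h1
      · rw [insF_lt h1, hfv' x (by omega), delF, if_pos h1]
      rcases Nat.lt_or_ge x (a + s) with h2 | h2
      · rw [insF_mid h1 h2]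
        have := hrun (x - a) (by omega)
        rw [show a + (x - a) = x by omega] at this
        rw [this]
      · rw [insF_ge h2, hfv' (x - s) (by omega), delF, if_neg (by omega),
          show x - s + s = x by omega]
    have hF1 : ∀ x, x < n →
        insF n a s (dirOf n σ M) (fv (mkPerm (n-s) (delF a s (fv σ)))) x < n := by
      intro x hx; rw [hFeq x hx]; exact fv_lt σ hx
    have hF2 : ∀ x, x < n → ∀ y, y < n →
        insF n a s (dirOf n σ M) (fv (mkPerm (n-s) (delF a s (fv σ)))) x =
        insF n a s (dirOf n σ M) (fv (mkPerm (n-s) (delF a s (fv σ)))) y → x = y := by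
      intro x hx y hy hxy
      rw [hFeq x hx, hFeq y hy] at hxy
      exact fv_inj σ hx hy hxy
    apply perm_ext_fv
    intro x hx
    rw [mkPerm_fv hF1 hF2 hx, hFeq x hx]
  · -- mark set round trip
    ext q
    rw [mem_insM]
    constructor
    · rintro (⟨h1, h2⟩ | ⟨h1, h2⟩ | ⟨h1, h2⟩)
      · rw [mem_delM hs1] at h2
        rcases h2 with ⟨_, h⟩ | ⟨h, _⟩ <;> [exact h; omega]
      · exact hmarks q h1 (by omega)
      · rw [mem_delM hs1] at h2
        rcases h2 with ⟨h3, _⟩ | ⟨h3, h4⟩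
        · omega
        · rwa [show q - s + s = q by omega] at h4
    · intro hq
      rcases htri q hq with h | h | h
      · exact Or.inl ⟨h, by rw [mem_delM hs1]; exact Or.inl ⟨h, hq⟩⟩
      · right; left; omega
      · right; right
        refine ⟨by omega, ?_⟩
        rw [mem_delM hs1]
        right
        rw [show q - s + s = q by omega]
        exact ⟨by omega, hq⟩

lemma ins_del_id {n m s : ℕ} (hn : 0 < n) (hs1 : 1 ≤ s) (hsn : s ≤ n)
    (dir : Bool) (p : ℕ) (σ' : Equiv.Perm (Fin (n-s))) (M' : Finset ℕ)
    (hp : p < n - s + 1) (hMok' : Mok (n-s) σ' M')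
    (hdir1 : s = 1 → dir = false) (hpc : p = 0 ∨ p - 1 ∉ M')
    (hc : M'.card + (s-1) = m) :
    mkPerm (n-s) (delF p s (fv (mkPerm n (insF n p s dir (fv σ'))))) = σ'
    ∧ delM p s (insM p s M') = M' := by
  obtain ⟨hfv, _, _⟩ :=
    ins_facts (m := m) hn hs1 hsn dir p σ' M' hp hMok' hdir1 hpc hc
  constructor
  · have hGeq : ∀ x, x < n - s →
        delF p s (fv (mkPerm n (insF n p s dir (fv σ')))) x = fv σ' x := by
      intro x hx
      rw [delF]
      split
      · rw [hfv x (by omega), insF_lt (by omega)]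
      · rw [hfv (x + s) (by omega), insF_ge (by omega), Nat.add_sub_cancel]
    have hG1 : ∀ x, x < n - s →
        delF p s (fv (mkPerm n (insF n p s dir (fv σ')))) x < n - s := by
      intro x hx; rw [hGeq x hx]; exact fv_lt σ' hx
    have hG2 : ∀ x, x < n - s → ∀ y, y < n - s →
        delF p s (fv (mkPerm n (insF n p s dir (fv σ')))) x =
        delF p s (fv (mkPerm n (insF n p s dir (fv σ')))) y → x = y := by
      intro x hx y hy hxy
      rw [hGeq x hx, hGeq y hy] at hxy
      exact fv_inj σ' hx hy hxy
    apply perm_ext_fv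
    intro x hx
    rw [mkPerm_fv hG1 hG2 hx, hGeq x hx]
  · ext q
    rw [mem_delM hs1]
    constructor
    · rintro (⟨h1, h2⟩ | ⟨h1, h2⟩)
      · rw [mem_insM] at h2
        rcases h2 with ⟨_, h⟩ | ⟨h, _⟩ | ⟨h, _⟩ <;> [exact h; omega; omega]
      · rw [mem_insM] at h2
        rcases h2 with ⟨h3, _⟩ | ⟨_, h3⟩ | ⟨_, h3⟩
        · omega
        · omega
        · rwa [Nat.add_sub_cancel] at h3
    · intro hq
      have hq' : q + 1 < p ∨ p ≤ q := by
        rcases hpc with h | h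
        · omega
        · have : q ≠ p - 1 := fun hq' => h (hq' ▸ hq)
          omega
      rcases hq' with h | h
      · exact Or.inl ⟨h, by rw [mem_insM]; exact Or.inl ⟨h, hq⟩⟩
      · right
        refine ⟨h, ?_⟩
        rw [mem_insM]
        right; right
        rw [Nat.add_sub_cancel]
        exact ⟨by omega, hq⟩

lemma card_filter_topSize (n m s : ℕ) (hn : 0 < n) (hs1 : 1 ≤ s) (hsn : s ≤ n) :
    ((AF n m).filter (fun x => topSize n x.1 x.2 = s)).card = (BF n m s).card := by
  apply Finset.card_bij'
    (i := fun x _ => ((dirOf n x.1 x.2, blockL x.2 (maxPos n x.1)),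
      (mkPerm (n-s) (delF (blockL x.2 (maxPos n x.1)) s (fv x.1)),
       delM (blockL x.2 (maxPos n x.1)) s x.2)))
    (j := fun y _ => (mkPerm n (insF n y.1.2 s y.1.1 (fv y.2.1)), insM y.1.2 s y.2.2))
  · -- hi
    intro x hx
    rw [Finset.mem_filter, mem_AF] at hx
    obtain ⟨⟨h1, h2⟩, h3⟩ := hx
    exact del_mem hn x.1 x.2 h1 h2 h3
  · -- hj
    intro y hy
    rw [mem_BF] at hy
    obtain ⟨h1, h2, h3, h4, h5⟩ := hy
    obtain ⟨_, ⟨hA, hT⟩, _⟩ :=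
      ins_facts (m := m) hn hs1 hsn y.1.1 y.1.2 y.2.1 y.2.2 h1 h2 h3 h4 h5
    rw [Finset.mem_filter]
    exact ⟨hA, hT⟩
  · -- left inverse
    intro x hx
    rw [Finset.mem_filter, mem_AF] at hx
    obtain ⟨⟨h1, h2⟩, h3⟩ := hx
    obtain ⟨e1, e2⟩ := del_ins_id hn x.1 x.2 h1 h2 h3
    exact Prod.ext e1 e2
  · -- right inverse
    intro y hy
    rw [mem_BF] at hy
    obtain ⟨h1, h2, h3, h4, h5⟩ := hy
    obtain ⟨hfv, ⟨hA, hT⟩, hBL, hdir⟩ :=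
      ins_facts (m := m) hn hs1 hsn y.1.1 y.1.2 y.2.1 y.2.2 h1 h2 h3 h4 h5
    obtain ⟨e1, e2⟩ := ins_del_id (m := m) hn hs1 hsn y.1.1 y.1.2 y.2.1 y.2.2 h1 h2 h3 h4 h5
    refine Prod.ext (Prod.ext ?_ ?_) (Prod.ext ?_ ?_) <;> dsimp only
    · exact hdir
    · exact hBL
    · rw [hBL]; exact e1
    · rw [hBL]; exact e2


lemma card_BF (n m s : ℕ) (hs1 : 1 ≤ s) (hsn : s ≤ n) :
    (BF n m s).card =
      if s - 1 ≤ m then wgt s * (n - m) * (AF (n-s) (m - (s-1))).card else 0 := by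
  by_cases hsm : s - 1 ≤ m
  · rw [if_pos hsm]
    have hmap : ∀ y ∈ BF n m s, y.2 ∈ AF (n-s) (m - (s-1)) := by
      intro y hy
      rw [mem_BF] at hy
      rw [mem_AF]
      exact ⟨hy.2.1, by omega⟩
    rw [Finset.card_eq_sum_card_fiberwise hmap]
    rw [Finset.sum_congr rfl (fun z hz => ?_), Finset.sum_const, smul_eq_mul]
    · rw [mul_comm]
    -- each fiber has cardinality wgt s * (n - m)
    rw [mem_AF] at hz
    obtain ⟨hzok, hzcard⟩ := hz
    have hfib : (BF n m s).filter (fun y => y.2 = z) =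
        ((if s = 1 then ({false} : Finset Bool) else Finset.univ) ×ˢ
          ((Finset.range (n - s + 1)).filter (fun p => p = 0 ∨ p - 1 ∉ z.2))) ×ˢ {z} := by
      ext y
      rw [Finset.mem_filter, mem_BF, Finset.mem_product, Finset.mem_product,
        Finset.mem_filter, Finset.mem_singleton, Finset.mem_range]
      constructor
      · rintro ⟨⟨h1, h2, h3, h4, h5⟩, h6⟩
        subst h6
        refine ⟨⟨?_, h1, h4⟩, rfl⟩
        split
        · rw [Finset.mem_singleton]
          exact h3 (by assumption)
        · exact Finset.mem_univ _
      · rintro ⟨⟨hd, hp1, hp2⟩, h6⟩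
        subst h6
        refine ⟨⟨hp1, hzok, ?_, hp2, by omega⟩, rfl⟩
        intro hs'
        rw [if_pos hs', Finset.mem_singleton] at hd
        exact hd
    rw [hfib, Finset.card_product, Finset.card_product, Finset.card_singleton, mul_one]
    congr 1
    · -- direction count
      rw [wgt]
      split
      · rw [if_pos (by omega), Finset.card_singleton]
      · rw [if_neg (by omega)]
        simp
    · -- position count
      have hiff : (Finset.range (n - s + 1)).filter (fun p => p = 0 ∨ p - 1 ∉ z.2) =
          Finset.range (n - s + 1) \ (z.2.image (fun q => q + 1)) := by
        ext p
        rw [Finset.mem_filter, Finset.mem_sdiff, Finset.mem_image]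
        constructor
        · rintro ⟨h1, h2⟩
          refine ⟨h1, ?_⟩
          rintro ⟨q, hq, rfl⟩
          rcases h2 with h | h
          · omega
          · rw [Nat.add_sub_cancel] at h
            exact h hq
        · rintro ⟨h1, h2⟩
          refine ⟨h1, ?_⟩
          rcases Nat.eq_zero_or_pos p with h | h
          · exact Or.inl h
          · right
            intro hmem
            exact h2 ⟨p - 1, hmem, by omega⟩
      have himgsub : z.2.image (fun q => q + 1) ⊆ Finset.range (n - s + 1) := by
        intro q hq
        rw [Finset.mem_image] at hq
        obtain ⟨q0, hq0, rfl⟩ := hq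
        have := (hzok q0 hq0).1
        rw [Finset.mem_range]
        omega
      have himgcard : (z.2.image (fun q => q + 1)).card = z.2.card :=
        Finset.card_image_of_injOn (fun x _ y _ h => by omega)
      rw [hiff, Finset.card_sdiff_of_subset himgsub, himgcard, Finset.card_range, hzcard]
      have hle := Finset.card_le_card himgsub
      rw [himgcard, Finset.card_range, hzcard] at hle
      omega
  · rw [if_neg hsm]
    rw [Finset.card_eq_zero]
    apply Finset.eq_empty_of_forall_notMem
    intro y hy
    rw [mem_BF] at hy
    omega

def Fm (n m : ℕ) : ℕ := if m ≤ n then (n-m).factorial * Wc n (n-m) else 0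

lemma sum_eq_Fm (n m : ℕ) (hn : 0 < n) :
    (∑ s ∈ Finset.range (n+1),
      (if s = 0 then 0
       else if s - 1 ≤ m then wgt s * (n - m) * Fm (n-s) (m-(s-1)) else 0)) = Fm n m := by
  rcases Nat.lt_or_ge m n with hm | hm
  · -- m < n
    have hk : 1 ≤ n - m := by omega
    rw [Finset.sum_range_succ']
    rw [if_pos rfl, add_zero]
    have hWn : Wc n (n - m) = ∑ j ∈ Finset.range n, wgt (j+1) * Wc (n - (j+1)) (n - m - 1) := by
      rw [show n - m = (n - m - 1) + 1 by omega, Wc]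
      simp only [Nat.add_sub_cancel]
    have hFm : Fm n m = (n-m).factorial * Wc n (n-m) := by
      rw [Fm, if_pos (by omega)]
    rw [hFm, hWn, Finset.mul_sum]
    apply Finset.sum_congr rfl
    intro j hj
    rw [Finset.mem_range] at hj
    rw [if_neg (by omega : ¬ j + 1 = 0)]
    rcases le_or_gt j m with hjm | hjm
    · rw [if_pos (by omega)]
      have e1 : Fm (n-(j+1)) (m - (j+1-1)) =
          (n - m - 1).factorial * Wc (n-(j+1)) (n - m - 1) := by
        rw [Fm, if_pos (by omega), show n-(j+1) - (m - (j+1-1)) = n - m - 1 by omega]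
      rw [e1]
      have e2 : (n - m) * (n - m - 1).factorial = (n - m).factorial :=
        Nat.mul_factorial_pred (by omega)
      rw [← e2]
      ring
    · rw [if_neg (by omega)]
      rw [Wc_eq_zero (n - m - 1) (n - (j+1)) (by omega), mul_zero, mul_zero]
  · -- n ≤ m : both sides vanish
    have hFm : Fm n m = 0 := by
      rw [Fm]
      rcases Nat.lt_or_ge n m with h | h
      · rw [if_neg (by omega)]
      · have : m = n := by omega
        subst this
        rw [if_pos le_rfl, Nat.sub_self, Wc, if_neg (by omega), mul_zero]
    rw [hFm]
    apply Finset.sum_eq_zero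
    intro s hs
    rcases Nat.eq_zero_or_pos s with h | h
    · rw [if_pos h]
    · rw [if_neg (by omega)]
      split
      · rw [show n - m = 0 by omega, mul_zero, zero_mul]
      · rfl

lemma AF_card : ∀ n m, (AF n m).card = Fm n m := by
  intro n
  induction n using Nat.strong_induction_on with
  | _ n ih =>
    intro m
    rcases Nat.eq_zero_or_pos n with hn | hn
    · subst hn
      rcases Nat.eq_zero_or_pos m with hm | hm
      · subst hm
        have : AF 0 0 = {(1, (∅ : Finset ℕ))} := by
          ext x
          rw [mem_AF, Finset.mem_singleton]
          constructor
          · rintro ⟨h1, h2⟩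
            have hx2 : x.2 = ∅ := Finset.card_eq_zero.mp h2
            have hx1 : x.1 = 1 := Equiv.ext fun i => i.elim0
            rw [Prod.ext_iff]
            exact ⟨hx1, hx2⟩
          · rintro rfl
            exact ⟨fun p hp => absurd hp (Finset.notMem_empty p), Finset.card_empty⟩
        rw [this, Finset.card_singleton, Fm, if_pos le_rfl]
        rw [Nat.sub_zero, Wc, if_pos rfl]
        simp [Nat.factorial]
      · have : AF 0 m = ∅ := by
          apply Finset.eq_empty_of_forall_notMem
          intro x hx
          rw [mem_AF] at hx
          obtain ⟨h1, h2⟩ := hx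
          have hx2 : x.2 = ∅ := by
            apply Finset.eq_empty_of_forall_notMem
            intro p hp
            have := (h1 p hp).1
            omega
          rw [hx2, Finset.card_empty] at h2
          omega
        rw [this, Finset.card_empty, Fm, if_neg (by omega)]
    · -- n ≥ 1
      have hpart : (AF n m).card = ∑ s ∈ Finset.range (n+1),
          ((AF n m).filter (fun x => topSize n x.1 x.2 = s)).card := by
        apply Finset.card_eq_sum_card_fiberwise
        intro x hx
        rw [Finset.mem_coe, mem_AF] at hx
        obtain ⟨hbf1, _, hbf3, _⟩ := block_facts hn x.1 x.2 hx.1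
        simp only [Finset.mem_coe, Finset.mem_range]
        omega
      rw [hpart, ← sum_eq_Fm n m hn]
      apply Finset.sum_congr rfl
      intro s hs
      rw [Finset.mem_range] at hs
      rcases Nat.eq_zero_or_pos s with h0 | h0
      · subst h0
        rw [if_pos rfl, Finset.card_eq_zero]
        apply Finset.eq_empty_of_forall_notMem
        intro x hx
        rw [Finset.mem_filter, mem_AF] at hx
        obtain ⟨⟨h1, _⟩, h2⟩ := hx
        obtain ⟨_, _, hbf3, _⟩ := block_facts hn x.1 x.2 h1
        omega
      · rw [if_neg (by omega), card_filter_topSize n m s hn h0 (by omega),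
          card_BF n m s h0 (by omega), ih (n - s) (by omega)]

lemma bond_iff {n : ℕ} (σ : Equiv.Perm (Fin n)) (p : ℕ) :
    (∃ h : p + 1 < n,
        (((σ ⟨p, by omega⟩).val : ℤ) - ((σ ⟨p + 1, h⟩).val : ℤ)).natAbs = 1)
      ↔ (p + 1 < n ∧ (fv σ (p+1) = fv σ p + 1 ∨ fv σ p = fv σ (p+1) + 1)) := by
  constructor
  · rintro ⟨h, habs⟩
    refine ⟨h, ?_⟩
    have e1 : fv σ p = (σ ⟨p, by omega⟩).val := by
      rw [fv, dif_pos (show p < n by omega)]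
    have e2 : fv σ (p+1) = (σ ⟨p + 1, h⟩).val := by
      rw [fv, dif_pos h]
    rw [e1, e2]
    omega
  · rintro ⟨h, hb⟩
    refine ⟨h, ?_⟩
    have e1 : fv σ p = (σ ⟨p, by omega⟩).val := by
      rw [fv, dif_pos (show p < n by omega)]
    have e2 : fv σ (p+1) = (σ ⟨p + 1, h⟩).val := by
      rw [fv, dif_pos h]
    rw [e1, e2] at hb
    omega

open PowerSeries in
/-- the coefficient of `zⁿuᵐ` in
`A(z,u) = Σ_{k≥0} k! (z + 2z²u/(1-zu))^k` equals the number of marked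
permutations `(σ, M)` with `σ ∈ S_n` and `M` a set of `m` bonds of `σ`.
(The sum may be truncated at `k = n` since the `k`-th term has `z`-order `k`.) -/
theorem stmt19 (n m : ℕ) :
    (Nat.card {x : Equiv.Perm (Fin n) × Finset ℕ //
        (∀ p ∈ x.2, ∃ h : p + 1 < n,
          (((x.1 ⟨p, by omega⟩).val : ℤ) - ((x.1 ⟨p + 1, h⟩).val : ℤ)).natAbs = 1) ∧
        x.2.card = m} : ℚ)
      = ∑ k ∈ Finset.range (n + 1),
          (k.factorial : ℚ) *
            (PowerSeries.coeff (R := ℚ) m) ((PowerSeries.coeff (R := PowerSeries ℚ) n) (runGF ^ k)) := by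
  have hiff : ∀ x : Equiv.Perm (Fin n) × Finset ℕ,
      ((∀ p ∈ x.2, ∃ h : p + 1 < n,
          (((x.1 ⟨p, by omega⟩).val : ℤ) - ((x.1 ⟨p + 1, h⟩).val : ℤ)).natAbs = 1) ∧
        x.2.card = m)
        ↔ x ∈ AF n m := by
    intro x
    rw [mem_AF]
    constructor
    · rintro ⟨h1, h2⟩
      refine ⟨fun p hp => (bond_iff x.1 p).mp (h1 p hp), h2⟩
    · rintro ⟨h1, h2⟩
      refine ⟨fun p hp => (bond_iff x.1 p).mpr (h1 p hp), h2⟩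
  have h1 : Nat.card {x : Equiv.Perm (Fin n) × Finset ℕ //
      (∀ p ∈ x.2, ∃ h : p + 1 < n,
        (((x.1 ⟨p, by omega⟩).val : ℤ) - ((x.1 ⟨p + 1, h⟩).val : ℤ)).natAbs = 1) ∧
      x.2.card = m} = (AF n m).card := by
    rw [Nat.card_congr (Equiv.subtypeEquivRight hiff), Nat.card_eq_finsetCard]
  rw [h1, AF_card n m, rhs_eval n m]
  by_cases hm : m ≤ n
  · rw [Fm, if_pos hm, if_pos hm]
    push_cast
    ring
  · rw [Fm, if_neg hm, if_neg hm]
    simp
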